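/- Let F be a field of characteristic 0 and let n ≥ 2. Let M be the n×n symmetric matrix over F that is the direct sum of the (n−2)×(n−2) identity matrix and the 2×2 matrix [[1, 1], [1, 0]]. Then qpr(M) = S S ⋯ S A, i.e., for every k with 1 ≤ k ≤ n − 1, M has both a zero and a nonzero quasi-principal minor of order k, and det M ≠ 0. -/
import Mathlib


open Matrix

/-- The minor of a square matrix `B` lying in the rows indexed by `α` and the columns
indexed by `β` (each listed in increasing order); junk value `0` if `α.card ≠ β.card`. -/
def qMinor {R : Type*} [CommRing R] {m : Type*} [Fintype m] [LinearOrder m]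
    (B : Matrix m m R) (α β : Finset m) : R :=
  if h : β.card = α.card then
    (Matrix.of fun i j : Fin α.card =>
      B (α.orderEmbOfFin rfl i) (β.orderEmbOfFin h j)).det
  else 0

/-- `α` and `β` index a quasi-principal submatrix of order `k`, i.e.
`|α| = |β| = k` and `k - 1 ≤ |α ∩ β| (≤ k)`. -/
def IsQPPair {m : Type*} [DecidableEq m] (k : ℕ) (α β : Finset m) : Prop :=
  α.card = k ∧ β.card = k ∧ k - 1 ≤ (α ∩ β).card

/-- All quasi-principal minors of `B` of order `k` are nonzero. -/
def QPAllNonzero {R : Type*} [CommRing R] {m : Type*} [Fintype m] [LinearOrder m]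
    (B : Matrix m m R) (k : ℕ) : Prop :=
  ∀ α β : Finset m, IsQPPair k α β → qMinor B α β ≠ 0

/-- All quasi-principal minors of `B` of order `k` are zero. -/
def QPAllZero {R : Type*} [CommRing R] {m : Type*} [Fintype m] [LinearOrder m]
    (B : Matrix m m R) (k : ℕ) : Prop :=
  ∀ α β : Finset m, IsQPPair k α β → qMinor B α β = 0

/-- The three possible letters of a qpr-sequence. -/
inductive QPR : Type
  | A
  | S
  | N
deriving DecidableEq

open Classical in
/-- The letter of the qpr-sequence of `B` corresponding to order `k`:
`A` if all quasi-principal minors of order `k` are nonzero, `N` if all are zero,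
and `S` otherwise. -/
noncomputable def qprEntry {R : Type*} [CommRing R] {m : Type*} [Fintype m] [LinearOrder m]
    (B : Matrix m m R) (k : ℕ) : QPR :=
  if QPAllNonzero B k then QPR.A
  else if QPAllZero B k then QPR.N
  else QPR.S

/-- A sequence of letters `q 0, …, q (n-1)` (standing for `q_1 ⋯ q_n`) is attainable
over `F` if it is the qpr-sequence of an `n × n` symmetric matrix over `F`. -/
def Attainable (F : Type*) [Field F] {n : ℕ} (q : Fin n → QPR) : Prop :=
  ∃ B : Matrix (Fin n) (Fin n) F, B.IsSymm ∧ ∀ k : Fin n, qprEntry B ((k : ℕ) + 1) = q k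

/-- The Schur complement `B/B[γ] = B[γᶜ] - B[γᶜ, γ] B[γ]⁻¹ B[γ, γᶜ]`,
with rows and columns indexed by `γᶜ` (indexing inherited from `B`). -/
noncomputable def schurCompl {R : Type*} [CommRing R] {n : ℕ}
    (B : Matrix (Fin n) (Fin n) R) (γ : Finset (Fin n)) :
    Matrix ↥(γᶜ) ↥(γᶜ) R :=
  B.submatrix (fun i : ↥(γᶜ) => (i : Fin n)) (fun j : ↥(γᶜ) => (j : Fin n)) -
    B.submatrix (fun i : ↥(γᶜ) => (i : Fin n)) (fun j : ↥γ => (j : Fin n)) *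
      (B.submatrix (fun i : ↥γ => (i : Fin n)) fun j : ↥γ => (j : Fin n))⁻¹ *
      B.submatrix (fun i : ↥γ => (i : Fin n)) fun j : ↥(γᶜ) => (j : Fin n)

/-- The `(m+1) × (m+1)` matrix with block form `[[A, x], [yᵀ, b]]`. -/
def borderMat {R : Type*} [CommRing R] {m : ℕ} (A : Matrix (Fin m) (Fin m) R)
    (x y : Fin m → R) (b : R) : Matrix (Fin (m + 1)) (Fin (m + 1)) R :=
  Matrix.of fun i j =>
    if hi : (i : ℕ) < m then
      if hj : (j : ℕ) < m then A ⟨i, hi⟩ ⟨j, hj⟩ else x ⟨i, hi⟩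
    else
      if hj : (j : ℕ) < m then y ⟨j, hj⟩ else b

/-- over a field of characteristic 0 and for `n ≥ 2`, the direct sum `M` of
the `(n-2) × (n-2)` identity matrix and `[[1, 1], [1, 0]]` has
`qpr(M) = S S ⋯ S A`: for each `k` with `1 ≤ k ≤ n - 1` the matrix `M` has both a zero
and a nonzero quasi-principal minor of order `k`, and `det M ≠ 0`. -/
theorem stmt_18 {F : Type*} [Field F] [CharZero F] {n : ℕ} (hn : 2 ≤ n)
    (M : Matrix (Fin n) (Fin n) F)
    (hM : M = Matrix.of fun i j : Fin n =>
      if i = j then (if (i : ℕ) < n - 1 then 1 else 0)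
      else if n - 2 ≤ (i : ℕ) ∧ n - 2 ≤ (j : ℕ) then 1 else 0) :
    (∀ k : ℕ, 1 ≤ k → k ≤ n - 1 →
      (∃ α β : Finset (Fin n), IsQPPair k α β ∧ qMinor M α β = 0) ∧
      (∃ α β : Finset (Fin n), IsQPPair k α β ∧ qMinor M α β ≠ 0)) ∧
    M.det ≠ 0 := by
  subst hM
  have hqm : ∀ (α : Finset (Fin n)),
      qMinor (Matrix.of fun i j : Fin n =>
        if i = j then (if (i : ℕ) < n - 1 then 1 else (0:F))
        else if n - 2 ≤ (i : ℕ) ∧ n - 2 ≤ (j : ℕ) then 1 else 0) α α =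
      (Matrix.of fun i j : Fin α.card =>
        (Matrix.of fun i j : Fin n =>
          if i = j then (if (i : ℕ) < n - 1 then 1 else (0:F))
          else if n - 2 ≤ (i : ℕ) ∧ n - 2 ≤ (j : ℕ) then 1 else 0)
          (α.orderEmbOfFin rfl i) (α.orderEmbOfFin rfl j)).det := by
    intro α
    rw [qMinor, dif_pos rfl]
  constructor
  · intro k hk1 hk2
    constructor
    · -- zero minor
      have hlt : ∀ m ∈ Finset.range (k-1), m < n := by
        intro m hm; simp only [Finset.mem_range] at hm; omega
      set b : Fin n := ⟨n-1, by omega⟩ with hb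
      have hbv : (b : ℕ) = n - 1 := rfl
      set α : Finset (Fin n) := insert b ((Finset.range (k-1)).attachFin hlt) with hα
      have hbnot : b ∉ (Finset.range (k-1)).attachFin hlt := by
        simp only [Finset.mem_attachFin, Finset.mem_range, hb]; omega
      have hcard : α.card = k := by
        rw [hα, Finset.card_insert_of_notMem hbnot, Finset.card_attachFin,
          Finset.card_range]; omega
      have hmem : ∀ j : Fin n, j ∈ α ↔ j = b ∨ (j:ℕ) < k - 1 := by
        intro j
        simp [hα, Finset.mem_attachFin, Finset.mem_range]
      refine ⟨α, α, ⟨hcard, hcard, by rw [Finset.inter_self, hcard]; omega⟩, ?_⟩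
      rw [hqm]
      have hbα : b ∈ α := by rw [hmem]; left; rfl
      have : ∃ r : Fin α.card, α.orderEmbOfFin rfl r = b := by
        have := Finset.range_orderEmbOfFin α (rfl : α.card = α.card)
        rw [← Finset.mem_coe, ← this] at hbα
        exact hbα
      obtain ⟨r, hr⟩ := this
      apply Matrix.det_eq_zero_of_row_eq_zero r
      intro j
      have hjα : α.orderEmbOfFin rfl j ∈ α := Finset.orderEmbOfFin_mem α rfl j
      rw [hmem] at hjα
      simp only [Matrix.of_apply, hr]
      rcases hjα with h | h
      · rw [h, if_pos rfl, if_neg (show ¬ ((b:ℕ) < n - 1) by omega)]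
      · have hne : b ≠ α.orderEmbOfFin rfl j := by
          intro he
          have := congrArg Fin.val he
          omega
        rw [if_neg hne, if_neg (show ¬ (n - 2 ≤ (b:ℕ) ∧
            n - 2 ≤ ((α.orderEmbOfFin rfl j : Fin n) : ℕ)) from fun hc => by omega)]
    · -- nonzero minor
      have hlt : ∀ m ∈ Finset.range k, m < n := by
        intro m hm; simp only [Finset.mem_range] at hm; omega
      set α : Finset (Fin n) := (Finset.range k).attachFin hlt with hα
      have hcard : α.card = k := by
        rw [hα, Finset.card_attachFin, Finset.card_range]
      have hmem : ∀ j : Fin n, j ∈ α ↔ (j:ℕ) < k := by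
        intro j; simp [hα, Finset.mem_attachFin, Finset.mem_range]
      refine ⟨α, α, ⟨hcard, hcard, by rw [Finset.inter_self, hcard]; omega⟩, ?_⟩
      rw [hqm]
      have hid : (Matrix.of fun i j : Fin α.card =>
          (Matrix.of fun i j : Fin n =>
            if i = j then (if (i : ℕ) < n - 1 then 1 else (0:F))
            else if n - 2 ≤ (i : ℕ) ∧ n - 2 ≤ (j : ℕ) then 1 else 0)
            (α.orderEmbOfFin rfl i) (α.orderEmbOfFin rfl j)) = 1 := by
        ext i j
        have hi : ((α.orderEmbOfFin rfl i : Fin n) : ℕ) < k := by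
          rw [← hmem]; exact Finset.orderEmbOfFin_mem α rfl i
        have hj : ((α.orderEmbOfFin rfl j : Fin n) : ℕ) < k := by
          rw [← hmem]; exact Finset.orderEmbOfFin_mem α rfl j
        by_cases hij : i = j
        · subst hij
          simp only [Matrix.of_apply, if_pos rfl, Matrix.one_apply_eq]
          have h1 : ((α.orderEmbOfFin rfl i : Fin n) : ℕ) < n - 1 := by omega
          rw [if_pos h1]
          simp
        · have hne : α.orderEmbOfFin rfl i ≠ α.orderEmbOfFin rfl j := by
            intro he; exact hij ((α.orderEmbOfFin rfl).injective he)
          have hnev : ((α.orderEmbOfFin rfl i : Fin n) : ℕ) ≠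
              ((α.orderEmbOfFin rfl j : Fin n) : ℕ) := by
            intro he; exact hne (Fin.ext he)
          simp only [Matrix.of_apply, if_neg hne, Matrix.one_apply_ne hij]
          have h2 : ¬ (n - 2 ≤ ((α.orderEmbOfFin rfl i : Fin n) : ℕ) ∧
              n - 2 ≤ ((α.orderEmbOfFin rfl j : Fin n) : ℕ)) := fun hc => by omega
          rw [if_neg h2]
      rw [hid, Matrix.det_one]
      exact one_ne_zero
  · -- det ≠ 0
    set a : Fin n := ⟨n-2, by omega⟩ with ha
    set b : Fin n := ⟨n-1, by omega⟩ with hb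
    have hav : (a : ℕ) = n - 2 := rfl
    have hbv : (b : ℕ) = n - 1 := rfl
    have hab : a ≠ b := by
      intro h; have := congrArg Fin.val h; omega
    set M : Matrix (Fin n) (Fin n) F := Matrix.of fun i j : Fin n =>
      if i = j then (if (i : ℕ) < n - 1 then 1 else (0:F))
      else if n - 2 ≤ (i : ℕ) ∧ n - 2 ≤ (j : ℕ) then 1 else 0 with hMdef
    set σ : Equiv.Perm (Fin n) := Equiv.swap a b with hσ
    have hperm := Matrix.det_permute σ M
    have htri : (M.submatrix σ id).BlockTriangular OrderDual.toDual := by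
      intro i j hij
      have hij' : (i : ℕ) < (j : ℕ) := hij
      simp only [Matrix.submatrix_apply, id]
      rcases lt_trichotomy ((i:ℕ)) (n-2) with h | h | h
      · have hia : i ≠ a := by intro he; have := congrArg Fin.val he; omega
        have hib : i ≠ b := by intro he; have := congrArg Fin.val he; omega
        rw [hσ, Equiv.swap_apply_of_ne_of_ne hia hib]
        have hne : i ≠ j := by intro he; subst he; omega
        simp only [hMdef, Matrix.of_apply, if_neg hne]
        rw [if_neg (show ¬ (n - 2 ≤ (i:ℕ) ∧ n - 2 ≤ (j:ℕ)) from fun hc => by omega)]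
      · have hia : i = a := Fin.ext (by rw [hav]; exact h)
        have hjb : j = b := by
          apply Fin.ext; rw [hbv]; have := j.isLt; omega
        rw [hia, hjb, hσ, Equiv.swap_apply_left]
        simp only [hMdef, Matrix.of_apply, if_pos rfl]
        rw [if_neg (show ¬ ((b:ℕ) < n - 1) by omega)]
        simp
      · exfalso; have := j.isLt; omega
    have hdiag : ∀ i : Fin n, (M.submatrix σ id) i i = 1 := by
      intro i
      simp only [Matrix.submatrix_apply, id]
      rcases lt_trichotomy ((i:ℕ)) (n-2) with h | h | h
      · have hia : i ≠ a := by intro he; have := congrArg Fin.val he; omega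
        have hib : i ≠ b := by intro he; have := congrArg Fin.val he; omega
        rw [hσ, Equiv.swap_apply_of_ne_of_ne hia hib]
        simp only [hMdef, Matrix.of_apply, if_pos rfl]
        rw [if_pos (show (i:ℕ) < n - 1 by omega)]
        simp
      · have hia : i = a := Fin.ext (by rw [hav]; exact h)
        rw [hia, hσ, Equiv.swap_apply_left]
        simp only [hMdef, Matrix.of_apply]
        rw [if_neg hab.symm,
          if_pos (show n - 2 ≤ (b:ℕ) ∧ n - 2 ≤ (a:ℕ) from ⟨by omega, by omega⟩)]
      · have hib : i = b := by apply Fin.ext; rw [hbv]; have := i.isLt; omega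
        rw [hib, hσ, Equiv.swap_apply_right]
        simp only [hMdef, Matrix.of_apply]
        rw [if_neg hab,
          if_pos (show n - 2 ≤ (a:ℕ) ∧ n - 2 ≤ (b:ℕ) from ⟨by omega, by omega⟩)]
    have hdet1 : (M.submatrix σ id).det = 1 := by
      rw [Matrix.det_of_lowerTriangular _ htri]
      exact Finset.prod_eq_one (fun i _ => hdiag i)
    rw [hdet1, hσ, Equiv.Perm.sign_swap hab] at hperm
    intro hzero
    rw [hzero, mul_zero] at hperm
    norm_num at hperm
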